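/- Suppose Mf is not identically ∞ and f is continuous at x. If h_i → 0, r_i are best radii at x + h_i (Mf(x+h_i) equals the average of |f| over B(x+h_i, r_i)), and r_i → r₀ with 0 < r₀ < ∞, then r₀ is a best radius at x: Mf(x) equals the average of |f| over B(x, r₀). -/

import Mathlib

open Filter Topology MeasureTheory Metric ENNReal

/-- Average of `|f|` over the ball `B(x, r)`. -/
noncomputable def avgAbs (n : ℕ) (f : EuclideanSpace ℝ (Fin n) → ℝ)
    (x : EuclideanSpace ℝ (Fin n)) (r : ℝ) : ℝ :=
  ⨍ y in ball x r, |f y| ∂volume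

/-- The centered Hardy–Littlewood maximal function, with values in `ℝ≥0∞`. -/
noncomputable def maxFn (n : ℕ) (f : EuclideanSpace ℝ (Fin n) → ℝ)
    (x : EuclideanSpace ℝ (Fin n)) : ℝ≥0∞ :=
  ⨆ (r : ℝ) (_ : 0 < r), ENNReal.ofReal (avgAbs n f x r)

open Set in
/-- Continuity of the integral of `|f|` over balls, in center and radius. -/
lemma tendsto_integral_ball_aux (n : ℕ) (f : EuclideanSpace ℝ (Fin n) → ℝ)
    (hf : LocallyIntegrable f volume)
    (x : EuclideanSpace ℝ (Fin n)) (c : ℕ → EuclideanSpace ℝ (Fin n)) (ρ : ℕ → ℝ) (ρ₀ : ℝ)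
    (hc : Tendsto c atTop (𝓝 x)) (hρ : Tendsto ρ atTop (𝓝 ρ₀)) (hρ₀ : 0 < ρ₀) :
    Tendsto (fun i => ∫ y in ball (c i) (ρ i), |f y| ∂volume) atTop
      (𝓝 (∫ y in ball x ρ₀, |f y| ∂volume)) := by
  set g : EuclideanSpace ℝ (Fin n) → ℝ := fun y => |f y| with hg
  have hgm : AEStronglyMeasurable g volume := by
    simpa [hg, Real.norm_eq_abs] using hf.aestronglyMeasurable.norm
  have hev : ∀ᶠ i in atTop, dist (c i) x < 1 ∧ ρ i < ρ₀ + 1 := by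
    filter_upwards [Metric.tendsto_nhds.1 hc 1 one_pos,
      hρ.eventually (eventually_lt_nhds (lt_add_one ρ₀))] with i h1 h2
    exact ⟨h1, h2⟩
  have hsub : ∀ᶠ i in atTop, ball (c i) (ρ i) ⊆ closedBall x (ρ₀ + 2) := by
    filter_upwards [hev] with i ⟨h1, h2⟩ y hy
    have := dist_triangle y (c i) x
    simp only [mem_ball] at hy
    simp only [mem_closedBall]
    nlinarith [@dist_nonneg _ _ y (c i)]
  have hint : IntegrableOn g (closedBall x (ρ₀ + 2)) volume := by
    simpa [hg, Real.norm_eq_abs, IntegrableOn] using (hf.integrableOn_isCompact (isCompact_closedBall x (ρ₀+2))).norm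
  rw [show (∫ y in ball x ρ₀, |f y| ∂volume) = ∫ y, (ball x ρ₀).indicator g y ∂volume by
    rw [integral_indicator measurableSet_ball]]
  have key := tendsto_integral_filter_of_dominated_convergence
    (μ := volume) (F := fun i y => (ball (c i) (ρ i)).indicator g y)
    (f := (ball x ρ₀).indicator g)
    ((closedBall x (ρ₀ + 2)).indicator g)
    (Eventually.of_forall fun i => hgm.indicator measurableSet_ball)
    (by
      filter_upwards [hsub] with i hi
      refine Eventually.of_forall fun y => ?_
      by_cases hy : y ∈ ball (c i) (ρ i)
      · rw [indicator_of_mem hy, indicator_of_mem (hi hy)]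
        simp [hg, Real.norm_eq_abs, abs_abs]
      · rw [indicator_of_notMem hy]; simpa [hg] using Set.indicator_nonneg (fun z _ => abs_nonneg (f z)) y)
    (hint.integrable_indicator measurableSet_closedBall)
    (by
      have hsph : volume (sphere x ρ₀) = 0 :=
        Measure.addHaar_sphere_of_ne_zero volume x hρ₀.ne'
      filter_upwards [compl_mem_ae_iff.2 hsph] with y hy
      simp only [mem_compl_iff, mem_sphere_iff_norm] at hy
      have hdist : dist y x ≠ ρ₀ := by simpa [dist_eq_norm] using hy
      rcases lt_or_gt_of_ne hdist with hlt | hgt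
      · have : ∀ᶠ i in atTop, y ∈ ball (c i) (ρ i) := by
          have hd : Tendsto (fun i => dist y (c i)) atTop (𝓝 (dist y x)) :=
            (tendsto_const_nhds.dist hc)
          have : Tendsto (fun i => ρ i - dist y (c i)) atTop (𝓝 (ρ₀ - dist y x)) :=
            hρ.sub hd
          filter_upwards [this.eventually (eventually_gt_nhds (sub_pos.2 hlt))] with i hi
          simpa [mem_ball, dist_comm] using sub_pos.1 hi
        have := this.mono fun i hi => indicator_of_mem hi g
        rw [indicator_of_mem (mem_ball.2 hlt)]
        exact Tendsto.congr' (this.mono fun i hi => hi.symm) tendsto_const_nhds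
      · have : ∀ᶠ i in atTop, y ∉ ball (c i) (ρ i) := by
          have hd : Tendsto (fun i => dist y (c i)) atTop (𝓝 (dist y x)) :=
            (tendsto_const_nhds.dist hc)
          have : Tendsto (fun i => dist y (c i) - ρ i) atTop (𝓝 (dist y x - ρ₀)) :=
            hd.sub hρ
          filter_upwards [this.eventually (eventually_gt_nhds (sub_pos.2 hgt))] with i hi
          simp only [mem_ball, dist_comm, not_lt]
          linarith [sub_pos.1 hi]
        have := this.mono fun i hi => indicator_of_notMem hi g
        rw [indicator_of_notMem (by simp [mem_ball, not_lt, hgt.le])]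
        exact Tendsto.congr' (this.mono fun i hi => hi.symm) tendsto_const_nhds)
  refine key.congr fun i => ?_
  rw [integral_indicator measurableSet_ball]

/-- Continuity of the measure of balls, in center and radius. -/
lemma tendsto_volume_ball_aux (n : ℕ)
    (x : EuclideanSpace ℝ (Fin n)) (c : ℕ → EuclideanSpace ℝ (Fin n)) (ρ : ℕ → ℝ) (ρ₀ : ℝ)
    (hρ : Tendsto ρ atTop (𝓝 ρ₀)) (hρ₀ : 0 < ρ₀) :
    Tendsto (fun i => (volume (ball (c i) (ρ i))).toReal) atTop
      (𝓝 ((volume (ball x ρ₀)).toReal)) := by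
  set v : ℝ := (volume (ball (0 : EuclideanSpace ℝ (Fin n)) 1)).toReal with hv
  have hfin : ∀ (z : EuclideanSpace ℝ (Fin n)) (s : ℝ), 0 < s →
      (volume (ball z s)).toReal = s ^ n * v := by
    intro z s hs
    rw [Measure.addHaar_ball_of_pos volume z hs, ENNReal.toReal_mul, ENNReal.toReal_ofReal
      (by positivity), finrank_euclideanSpace_fin]
  have hpos : ∀ᶠ i in atTop, 0 < ρ i := hρ.eventually (eventually_gt_nhds hρ₀)
  have : Tendsto (fun i => ρ i ^ n * v) atTop (𝓝 (ρ₀ ^ n * v)) :=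
    ((hρ.pow n).mul_const v)
  rw [hfin x ρ₀ hρ₀]
  exact this.congr' (hpos.mono fun i hi => (hfin (c i) (ρ i) hi).symm)

/-- Continuity of the ball averages, in center and radius. -/
lemma tendsto_avgAbs_aux (n : ℕ) (f : EuclideanSpace ℝ (Fin n) → ℝ)
    (hf : LocallyIntegrable f volume)
    (x : EuclideanSpace ℝ (Fin n)) (c : ℕ → EuclideanSpace ℝ (Fin n)) (ρ : ℕ → ℝ) (ρ₀ : ℝ)
    (hc : Tendsto c atTop (𝓝 x)) (hρ : Tendsto ρ atTop (𝓝 ρ₀)) (hρ₀ : 0 < ρ₀) :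
    Tendsto (fun i => avgAbs n f (c i) (ρ i)) atTop (𝓝 (avgAbs n f x ρ₀)) := by
  have hvol := tendsto_volume_ball_aux n x c ρ ρ₀ hρ hρ₀
  have hvne : ((volume (ball x ρ₀)).toReal) ≠ 0 := by
    refine (ENNReal.toReal_pos ?_ ?_).ne'
    · exact (measure_ball_pos volume x hρ₀).ne'
    · exact measure_ball_lt_top.ne
  have hinv := hvol.inv₀ hvne
  have hintg := tendsto_integral_ball_aux n f hf x c ρ ρ₀ hc hρ hρ₀
  have := hinv.mul hintg
  simp only [avgAbs, setAverage_eq, smul_eq_mul]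
  exact this

/-- If `Mf ≢ ∞`, `f` is continuous at `x`, and best radii `r i` at `x + h i` converge to
`r₀ ∈ (0, ∞)` while `h i → 0`, then `r₀` is a best radius at `x`. -/
theorem limit_of_best_radii_is_best_radius
    (n : ℕ) (f : EuclideanSpace ℝ (Fin n) → ℝ) (hf : LocallyIntegrable f volume)
    (hne : ∃ z, maxFn n f z ≠ ⊤)
    (x : EuclideanSpace ℝ (Fin n)) (hc : ContinuousAt f x)
    (h : ℕ → EuclideanSpace ℝ (Fin n)) (r : ℕ → ℝ) (r₀ : ℝ)
    (hrpos : ∀ i, 0 < r i)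
    (hbest : ∀ i, maxFn n f (x + h i) = ENNReal.ofReal (avgAbs n f (x + h i) (r i)))
    (hh : Tendsto h atTop (𝓝 0)) (hr : Tendsto r atTop (𝓝 r₀)) (hr₀ : 0 < r₀) :
    maxFn n f x = ENNReal.ofReal (avgAbs n f x r₀) := by
  have hxc : Tendsto (fun i => x + h i) atTop (𝓝 x) := by
    have := tendsto_const_nhds (x := x) (f := atTop (α := ℕ)) |>.add hh
    simpa using this
  -- liminf of the maximal function along x + h i equals ofReal (avgAbs n f x r₀)
  have hmain : Tendsto (fun i => maxFn n f (x + h i)) atTop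
      (𝓝 (ENNReal.ofReal (avgAbs n f x r₀))) := by
    have := (tendsto_avgAbs_aux n f hf x (fun i => x + h i) r r₀ hxc hr hr₀)
    have := (ENNReal.continuous_ofReal.tendsto _).comp this
    refine this.congr fun i => ?_
    exact (hbest i).symm
  have hliminf : Filter.liminf (fun i => maxFn n f (x + h i)) atTop
      = ENNReal.ofReal (avgAbs n f x r₀) := hmain.liminf_eq
  refine le_antisymm ?_ ?_
  · -- maxFn n f x ≤ liminf maxFn (x + h i)
    rw [maxFn, ← hliminf]
    refine iSup₂_le fun ρ hρ => ?_
    have hρlim : Tendsto (fun i => ENNReal.ofReal (avgAbs n f (x + h i) ρ)) atTop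
        (𝓝 (ENNReal.ofReal (avgAbs n f x ρ))) :=
      (ENNReal.continuous_ofReal.tendsto _).comp
        (tendsto_avgAbs_aux n f hf x (fun i => x + h i) (fun _ => ρ) ρ hxc tendsto_const_nhds hρ)
    calc ENNReal.ofReal (avgAbs n f x ρ)
        = Filter.liminf (fun i => ENNReal.ofReal (avgAbs n f (x + h i) ρ)) atTop :=
          hρlim.liminf_eq.symm
      _ ≤ Filter.liminf (fun i => maxFn n f (x + h i)) atTop := by
          refine Filter.liminf_le_liminf (Eventually.of_forall fun i => ?_)
          exact le_iSup₂ (f := fun s (_ : 0 < s) =>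
            ENNReal.ofReal (avgAbs n f (x + h i) s)) ρ hρ
  · exact le_iSup₂ (f := fun s (_ : 0 < s) => ENNReal.ofReal (avgAbs n f x s)) r₀ hr₀
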